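/- Let G be a graph of maximum degree r ≥ 3 whose nodes carry i.i.d. weights from a continuous distribution. Then for any node i and any d ≥ 0, the probability that IB(N(i)) ⊆ N_d(i) is at least 1 − r(r−1)^d/(d+1)!. -/

import Mathlib

set_option maxHeartbeats 1000000

open MeasureTheory
open scoped ENNReal

variable {V : Type*}

/-- The ball `N_d(z)` : nodes at graph distance at most `d` from `z`. -/
def gball (G : SimpleGraph V) (z : V) (d : ℕ) : Set V :=
  {v | ∃ p : G.Walk z v, p.length ≤ d}

/-- There is a weight-increasing path in `G` from (some node of) `Z` to `v`. -/
def IsIncPathFrom (G : SimpleGraph V) (w : V → ℝ) (Z : Set V) (v : V) : Prop :=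
  ∃ n : ℕ, ∃ p : Fin (n + 1) → V,
    p 0 ∈ Z ∧ p (Fin.last n) = v ∧
    (∀ i : Fin n, G.Adj (p i.castSucc) (p i.succ)) ∧ StrictMono (w ∘ p)

/-- The minimal influence blocking subgraph `IB(Z)`. -/
def IB (G : SimpleGraph V) (w : V → ℝ) (Z : Set V) : Set V :=
  {v | IsIncPathFrom G w Z v}

lemma strictMono_event_measurable (m : ℕ) (q : Fin m → V) :
    MeasurableSet {w : V → ℝ | StrictMono (w ∘ q)} := by
  have : {w : V → ℝ | StrictMono (w ∘ q)} =
      ⋂ (a : Fin m), ⋂ (b : Fin m), ⋂ (_ : a < b), {w | w (q a) < w (q b)} := by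
    ext w; simp [StrictMono, Set.mem_iInter, Function.comp]
  rw [this]
  exact MeasurableSet.iInter fun a => MeasurableSet.iInter fun b => MeasurableSet.iInter fun _ =>
    measurableSet_lt (measurable_pi_apply _) (measurable_pi_apply _)

lemma order_stat [Fintype V] (ν : Measure ℝ) [IsProbabilityMeasure ν]
    (m : ℕ) (q : Fin m → V) :
    (Measure.pi fun _ : V => ν) {w : V → ℝ | StrictMono (w ∘ q)} ≤
      1 / (Nat.factorial m : ℝ≥0∞) := by
  classical
  set μ := (Measure.pi fun _ : V => ν) with hμ
  by_cases hinj : Function.Injective q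
  · -- events indexed by permutations
    set A : Equiv.Perm (Fin m) → Set (V → ℝ) :=
      fun σ => {w : V → ℝ | StrictMono (w ∘ (q ∘ σ))} with hA
    have hmeas : ∀ σ, MeasurableSet (A σ) := fun σ => strictMono_event_measurable m (q ∘ σ)
    -- each has the same measure
    have hsame : ∀ σ : Equiv.Perm (Fin m), μ (A σ) = μ (A 1) := by
      intro σ
      set e : Equiv.Perm V := σ.viaEmbedding ⟨q, hinj⟩ with he
      have heq : ∀ j, e (q j) = q (σ j) := fun j =>
        Equiv.Perm.viaEmbedding_apply σ ⟨q, hinj⟩ j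
      -- w ↦ w ∘ e is measure preserving
      have hmp : MeasurePreserving (fun w : V → ℝ => w ∘ e) μ μ := by
        have h := measurePreserving_piCongrLeft (fun _ : V => ν) e.symm
        have : (⇑(MeasurableEquiv.piCongrLeft (fun _ : V => ℝ) e.symm)) =
            (fun w : V → ℝ => w ∘ e) := by
          ext w v
          simp [MeasurableEquiv.piCongrLeft, Equiv.piCongrLeft_apply]
        rwa [this] at h
      have hpre : (fun w : V → ℝ => w ∘ e) ⁻¹' (A 1) = A σ := by
        ext w
        simp only [Set.mem_preimage, hA, Set.mem_setOf_eq]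
        constructor
        · intro h
          have : (w ∘ e) ∘ q = w ∘ (q ∘ σ) := by
            funext j; simp [Function.comp, heq j]
          simpa [this] using h
        · intro h
          have : (w ∘ e) ∘ q = w ∘ (q ∘ σ) := by
            funext j; simp [Function.comp, heq j]
          simpa [this] using h
      calc μ (A σ) = μ ((fun w : V → ℝ => w ∘ e) ⁻¹' (A 1)) := by rw [hpre]
        _ = μ (A 1) := hmp.measure_preimage (hmeas 1).nullMeasurableSet
    -- disjoint
    have hdisj : ((Finset.univ : Finset (Equiv.Perm (Fin m))) : Set (Equiv.Perm (Fin m))).PairwiseDisjoint A := by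
      intro σ _ τ _ hne
      refine Set.disjoint_left.2 fun w hσ hτ => hne ?_
      simp only [hA, Set.mem_setOf_eq] at hσ hτ
      have hginj : Function.Injective (w ∘ q) := by
        have h1 : Function.Injective ((w ∘ q) ∘ σ) := hσ.injective
        have h2 := h1.comp σ.symm.injective
        have h3 : ((w ∘ q) ∘ ⇑σ) ∘ ⇑σ.symm = w ∘ q := by
          funext j; simp
        rwa [h3] at h2
      have hrange : Set.range (w ∘ q ∘ ⇑σ) = Set.range (w ∘ q ∘ ⇑τ) := by
        rw [show w ∘ q ∘ ⇑σ = (w ∘ q) ∘ ⇑σ from rfl, show w ∘ q ∘ ⇑τ = (w ∘ q) ∘ ⇑τ from rfl,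
          Set.range_comp, Set.range_comp, σ.range_eq_univ, τ.range_eq_univ]
      haveI : WellFoundedLT (Fin m) := inferInstance
      have heqf : w ∘ q ∘ ⇑σ = w ∘ q ∘ ⇑τ := (StrictMono.range_inj hσ hτ).1 hrange
      apply Equiv.ext
      intro j
      have : (w ∘ q) (σ j) = (w ∘ q) (τ j) := congrFun heqf j
      exact hginj this
    -- sum up
    have hsum : ∑ σ : Equiv.Perm (Fin m), μ (A σ) ≤ 1 := by
      rw [← measure_biUnion_finset hdisj (fun σ _ => hmeas σ)]
      simpa using prob_le_one (μ := μ)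
    have hcard : (Finset.univ : Finset (Equiv.Perm (Fin m))).card = Nat.factorial m := by
      simp [Finset.card_univ, Fintype.card_perm]
    have hsum2 : (Nat.factorial m : ℝ≥0∞) * μ (A 1) ≤ 1 := by
      calc (Nat.factorial m : ℝ≥0∞) * μ (A 1)
          = ∑ σ : Equiv.Perm (Fin m), μ (A 1) := by
            rw [Finset.sum_const, hcard, nsmul_eq_mul]
        _ = ∑ σ : Equiv.Perm (Fin m), μ (A σ) := by
            exact Finset.sum_congr rfl fun σ _ => (hsame σ).symm
        _ ≤ 1 := hsum
    have hA1 : A 1 = {w : V → ℝ | StrictMono (w ∘ q)} := by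
      simp [hA]
    rw [← hA1]
    rw [ENNReal.le_div_iff_mul_le (by simp [Nat.factorial_ne_zero]) (by simp)]
    rw [mul_comm] at hsum2
    simpa using hsum2
  · -- non injective: event is empty
    obtain ⟨a, b, hab, hne⟩ : ∃ a b, q a = q b ∧ a ≠ b := by
      simp only [Function.Injective, not_forall] at hinj
      obtain ⟨a, b, h1, h2⟩ := hinj
      exact ⟨a, b, h1, h2⟩
    have : {w : V → ℝ | StrictMono (w ∘ q)} = ∅ := by
      ext w
      simp only [Set.mem_setOf_eq, Set.mem_empty_iff_false, iff_false]
      intro h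
      exact hne (h.injective (by simp [Function.comp, hab]))
    simp [this]

def pathSet (G : SimpleGraph V) [Fintype V] [DecidableEq V] [DecidableRel G.Adj]
    (i : V) (d : ℕ) : Finset (Fin (d + 1) → V) :=
  Finset.univ.filter (fun q =>
    G.Adj i (q 0) ∧ (∀ j : Fin d, G.Adj (q j.castSucc) (q j.succ)) ∧
    (∀ j : Fin d, q j.succ ≠ i) ∧ Function.Injective q)

lemma mem_pathSet {G : SimpleGraph V} [Fintype V] [DecidableEq V] [DecidableRel G.Adj]
    {i : V} {d : ℕ} {q : Fin (d + 1) → V} :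
    q ∈ pathSet G i d ↔
      G.Adj i (q 0) ∧ (∀ j : Fin d, G.Adj (q j.castSucc) (q j.succ)) ∧
      (∀ j : Fin d, q j.succ ≠ i) ∧ Function.Injective q := by
  simp [pathSet]

lemma pathSet_card (G : SimpleGraph V) [Fintype V] [DecidableEq V] [DecidableRel G.Adj]
    (r : ℕ) (hdeg : ∀ v, G.degree v ≤ r) (i : V) (d : ℕ) :
    (pathSet G i d).card ≤ r * (r - 1) ^ d := by
  induction d with
  | zero =>
    simp only [pow_zero, mul_one]
    have : (pathSet G i 0).card ≤ (G.neighborFinset i).card := by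
      apply Finset.card_le_card_of_injOn (fun q => q 0)
      · intro q hq
        rw [Finset.mem_coe, mem_pathSet] at hq
        rw [Finset.mem_coe, SimpleGraph.mem_neighborFinset]
        exact hq.1
      · intro q₁ _ q₂ _ h
        funext j
        have hj : j = 0 := by ext; omega
        rw [hj]; exact h
    calc (pathSet G i 0).card ≤ (G.neighborFinset i).card := this
      _ = G.degree i := (SimpleGraph.card_neighborFinset_eq_degree G i)
      _ ≤ r := hdeg i
  | succ d ih =>
    -- previous node in the full path i :: q'
    set prev : (Fin (d + 1) → V) → V := fun q' => (Fin.cons i q' : Fin (d + 2) → V) ⟨d, Nat.lt_succ_of_lt (Nat.lt_succ_self d)⟩ with hprev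
    set ext : (Fin (d + 1) → V) → Finset (Fin (d + 2) → V) := fun q' =>
      ((G.neighborFinset (q' (Fin.last d))).erase (prev q')).image
        (fun v => Fin.snoc q' v) with hext
    have hsub : pathSet G i (d + 1) ⊆ (pathSet G i d).biUnion ext := by
      intro q hq
      rw [mem_pathSet] at hq
      obtain ⟨h0, hchain, hni, hinj⟩ := hq
      set q' : Fin (d + 1) → V := q ∘ Fin.castSucc with hq'
      have hq'mem : q' ∈ pathSet G i d := by
        rw [mem_pathSet]
        refine ⟨?_, ?_, ?_, hinj.comp (Fin.castSucc_injective _)⟩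
        · simpa [hq'] using h0
        · intro j
          have h := hchain j.castSucc
          have e2 : q' j.castSucc = q j.castSucc.castSucc := rfl
          have e3 : q' j.succ = q j.castSucc.succ := congrArg q (Fin.succ_castSucc j).symm
          rw [e2, e3]
          exact h
        · intro j
          have h := hni j.castSucc
          have e3 : q' j.succ = q j.castSucc.succ := congrArg q (Fin.succ_castSucc j).symm
          rw [e3]
          exact h
      rw [Finset.mem_biUnion]
      refine ⟨q', hq'mem, ?_⟩
      rw [hext, Finset.mem_image]
      refine ⟨q (Fin.last (d + 1)), ?_, ?_⟩
      · rw [Finset.mem_erase]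
        constructor
        · -- q last ≠ prev q'
          rcases Nat.eq_zero_or_pos d with hd | hd
          · subst hd
            have : prev q' = i := by simp [hprev]
            rw [this]
            have := hni (Fin.last 0)
            convert this using 2; ext; simp
          · have : prev q' = q ⟨d - 1, by omega⟩ := by
              have : (⟨d, by omega⟩ : Fin (d + 2)) = Fin.succ ⟨d - 1, by omega⟩ := by
                ext; simp; omega
              rw [hprev]
              simp only [this, Fin.cons_succ]
              rfl
            rw [this]
            intro hcon
            have := hinj hcon
            have : (Fin.last (d+1)).val = d - 1 := congrArg Fin.val this
            simp [Fin.last] at this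
            omega
        · rw [SimpleGraph.mem_neighborFinset]
          have := hchain (Fin.last d)
          have e1 : q' (Fin.last d) = q (Fin.last d).castSucc := rfl
          have e2 : (Fin.last d).succ = Fin.last (d + 1) := by ext; simp
          rw [e1]
          rw [e2] at this
          exact this
      · refine funext (Fin.lastCases ?_ ?_)
        · rw [Fin.snoc_last]
        · intro x
          rw [Fin.snoc_castSucc]
          rfl
    calc (pathSet G i (d + 1)).card
        ≤ ∑ q' ∈ pathSet G i d, (ext q').card :=
          le_trans (Finset.card_le_card hsub) (Finset.card_biUnion_le)
      _ ≤ ∑ q' ∈ pathSet G i d, (r - 1) := by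
          apply Finset.sum_le_sum
          intro q' hq'
          rw [mem_pathSet] at hq'
          obtain ⟨h0, hchain, hni, hinj⟩ := hq'
          calc (ext q').card
              ≤ ((G.neighborFinset (q' (Fin.last d))).erase (prev q')).card := by
                simp only [hext]
                exact Finset.card_image_le
            _ ≤ (G.neighborFinset (q' (Fin.last d))).card - 1 := by
                apply le_of_eq
                apply Finset.card_erase_of_mem
                rw [SimpleGraph.mem_neighborFinset]
                -- Adj (q' last) (prev q')
                rcases Nat.eq_zero_or_pos d with hd | hd
                · subst hd
                  have : prev q' = i := by simp [hprev]
                  rw [this]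
                  have h00 : (Fin.last 0) = (0 : Fin 1) := rfl
                  rw [h00]
                  exact h0.symm
                · have hpv : prev q' = q' ⟨d - 1, by omega⟩ := by
                    have h2 : (⟨d, by omega⟩ : Fin (d + 2)) = Fin.succ ⟨d - 1, by omega⟩ := by
                      ext; simp; omega
                    rw [hprev]
                    simp only [h2, Fin.cons_succ]
                  rw [hpv]
                  have := hchain ⟨d - 1, by omega⟩
                  have e1 : (⟨d - 1, by omega⟩ : Fin d).castSucc = (⟨d - 1, by omega⟩ : Fin (d+1)) := rfl
                  have e2 : (⟨d - 1, by omega⟩ : Fin d).succ = Fin.last d := by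
                    ext; simp; omega
                  rw [e1, e2] at this
                  exact this.symm
            _ ≤ r - 1 := by
                have := hdeg (q' (Fin.last d))
                rw [SimpleGraph.card_neighborFinset_eq_degree]
                omega
      _ = (pathSet G i d).card * (r - 1) := by rw [Finset.sum_const, smul_eq_mul]
      _ ≤ (r * (r - 1) ^ d) * (r - 1) := Nat.mul_le_mul_right _ ih
      _ = r * (r - 1) ^ (d + 1) := by ring

lemma self_mem_gball (G : SimpleGraph V) (i : V) (d : ℕ) : i ∈ gball G i d :=
  ⟨SimpleGraph.Walk.nil, by simp⟩

lemma gball_one_iff (G : SimpleGraph V) {i v : V} :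
    v ∈ gball G i 1 ↔ v = i ∨ G.Adj i v := by
  constructor
  · rintro ⟨p, hp⟩
    cases p with
    | nil => exact Or.inl rfl
    | cons h p' =>
      right
      simp only [SimpleGraph.Walk.length_cons] at hp
      have : p'.length = 0 := by omega
      have := SimpleGraph.Walk.eq_of_length_eq_zero this
      rwa [← this]
  · rintro (rfl | h)
    · exact self_mem_gball G v 1
    · exact ⟨SimpleGraph.Walk.cons h SimpleGraph.Walk.nil, by simp⟩

lemma chain_walk (G : SimpleGraph V) {n : ℕ} (p : Fin (n + 1) → V)
    (hadj : ∀ j : Fin n, G.Adj (p j.castSucc) (p j.succ)) (a : ℕ) (ha : a ≤ n) :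
    ∀ k, ∀ h : a + k ≤ n,
      ∃ W : G.Walk (p ⟨a, by omega⟩) (p ⟨a + k, by omega⟩), W.length = k := by
  intro k
  induction k with
  | zero => exact fun h => ⟨SimpleGraph.Walk.nil, rfl⟩
  | succ k ih =>
    intro h
    obtain ⟨W, hW⟩ := ih (by omega)
    have hadj' : G.Adj (p ⟨a + k, by omega⟩) (p ⟨a + k + 1, by omega⟩) :=
      hadj ⟨a + k, by omega⟩
    exact ⟨W.concat hadj', by simp [SimpleGraph.Walk.length_concat, hW]⟩

lemma extraction (G : SimpleGraph V) [Fintype V] [DecidableEq V] [DecidableRel G.Adj]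
    (i : V) (d : ℕ) (w : V → ℝ) (h : ¬ IB G w (gball G i 1) ⊆ gball G i d) :
    ∃ q ∈ pathSet G i d, StrictMono (w ∘ q) := by
  classical
  rw [Set.not_subset] at h
  obtain ⟨v, hv, hvout⟩ := h
  obtain ⟨n, p, hp0, hplast, hadj, hmono⟩ := hv
  set s : Finset (Fin (n + 1)) := Finset.univ.filter (fun a => p a ∈ gball G i 1) with hs
  have hs0 : (0 : Fin (n + 1)) ∈ s := by simp [hs, hp0]
  have hsne : s.Nonempty := ⟨0, hs0⟩
  set a := s.max' hsne with ha
  have hain : p a ∈ gball G i 1 := by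
    have := s.max'_mem hsne
    simp only [hs, Finset.mem_filter] at this
    exact this.2
  have hamax : ∀ b : Fin (n + 1), p b ∈ gball G i 1 → b ≤ a := fun b hb =>
    s.le_max' b (by simp [hs, hb])
  have hlen : a.val + d ≤ n := by
    by_contra hcon
    push_neg at hcon
    have haval : a.val ≤ n := by omega
    rcases Nat.eq_zero_or_pos d with hd | hd
    · omega
    · obtain ⟨W1, hW1⟩ := hain
      obtain ⟨W2, hW2⟩ := chain_walk G p hadj a.val (by omega) (n - a.val) (by omega)
      have e2 : (⟨a.val + (n - a.val), by omega⟩ : Fin (n + 1)) = Fin.last n := by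
        ext; simp [Fin.last]; omega
      have : v ∈ gball G i d := by
        refine ⟨W1.append (W2.copy rfl ((congrArg p e2).trans hplast)), ?_⟩
        rw [SimpleGraph.Walk.length_append, SimpleGraph.Walk.length_copy, hW2]
        omega
      exact hvout this
  set q : Fin (d + 1) → V := fun j => p ⟨a.val + j.val, by omega⟩ with hq
  have hqmono : StrictMono (w ∘ q) := by
    intro x y hxy
    exact hmono (show (⟨a.val + x.val, by omega⟩ : Fin (n + 1)) < ⟨a.val + y.val, by omega⟩ by
      simp only [Fin.lt_def]
      have := Fin.lt_def.mp hxy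
      omega)
  refine ⟨q, ?_, hqmono⟩
  rw [mem_pathSet]
  have hne_i : ∀ j : Fin d, q j.succ ≠ i := by
    intro j hcon
    have hmem : p ⟨a.val + j.val + 1, by omega⟩ ∈ gball G i 1 := by
      have : q j.succ = p ⟨a.val + j.val + 1, by omega⟩ := rfl
      rw [this] at hcon
      rw [hcon]
      exact self_mem_gball G i 1
    have := hamax _ hmem
    have : a.val + j.val + 1 ≤ a.val := this
    omega
  refine ⟨?_, ?_, hne_i, fun x y hxy => hqmono.injective (by simp [Function.comp, hxy])⟩
  · -- Adj i (q 0)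
    have hq0 : q 0 = p a := rfl
    rw [hq0]
    rcases (gball_one_iff G).mp hain with heq | hadji
    · exfalso
      rcases Nat.lt_or_ge a.val n with hlt | hge
      · -- p (a+1) adjacent to i
        have hadj1 : G.Adj (p a) (p ⟨a.val + 1, by omega⟩) := hadj ⟨a.val, hlt⟩
        rw [heq] at hadj1
        have hmem : p ⟨a.val + 1, by omega⟩ ∈ gball G i 1 :=
          (gball_one_iff G).mpr (Or.inr hadj1)
        have := hamax _ hmem
        have : a.val + 1 ≤ a.val := this
        omega
      · -- a = n, so p a = v
        have han : a = Fin.last n := by ext; simp [Fin.last]; omega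
        rw [han, hplast] at heq
        rw [heq] at hvout
        exact hvout (self_mem_gball G i d)
    · exact hadji
  · -- chain
    intro j
    exact hadj ⟨a.val + j.val, by omega⟩

/-- For a graph of maximum degree `r ≥ 3` with i.i.d. continuous node weights, for any node
`i` and any `d ≥ 0`, `P(IB(N(i)) ⊆ N_d(i)) ≥ 1 − r(r−1)^d/(d+1)!`. -/
theorem IB_ball_probability_nodes [Fintype V] (G : SimpleGraph V) [DecidableRel G.Adj]
    (r : ℕ) (hr : 3 ≤ r) (hdeg : ∀ v, G.degree v ≤ r) (i : V) (d : ℕ)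
    (ν : Measure ℝ) [IsProbabilityMeasure ν] [NullSingletonClass ν] :
    1 - ((r * (r - 1) ^ d : ℕ) : ℝ≥0∞) / ((Nat.factorial (d + 1) : ℕ) : ℝ≥0∞) ≤
      (Measure.pi fun _ : V => ν) {w : V → ℝ | IB G w (gball G i 1) ⊆ gball G i d} := by
  classical
  set μ := (Measure.pi fun _ : V => ν) with hμ
  set S := {w : V → ℝ | IB G w (gball G i 1) ⊆ gball G i d} with hS
  have hcompl : Sᶜ ⊆ ⋃ q ∈ pathSet G i d, {w : V → ℝ | StrictMono (w ∘ q)} := by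
    intro w hw
    obtain ⟨q, hq, hmono⟩ := extraction G i d w (by simpa [hS] using hw)
    exact Set.mem_biUnion hq hmono
  have h1 : μ Sᶜ ≤ ((r * (r - 1) ^ d : ℕ) : ℝ≥0∞) / ((Nat.factorial (d + 1) : ℕ) : ℝ≥0∞) := by
    calc μ Sᶜ ≤ μ (⋃ q ∈ pathSet G i d, {w : V → ℝ | StrictMono (w ∘ q)}) :=
          measure_mono hcompl
      _ ≤ ∑ q ∈ pathSet G i d, μ {w : V → ℝ | StrictMono (w ∘ q)} :=
          measure_biUnion_finset_le _ _
      _ ≤ (pathSet G i d).card • (1 / ((Nat.factorial (d + 1) : ℕ) : ℝ≥0∞)) :=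
          Finset.sum_le_card_nsmul _ _ _ (fun q _ => order_stat ν (d + 1) q)
      _ = ((pathSet G i d).card : ℝ≥0∞) / ((Nat.factorial (d + 1) : ℕ) : ℝ≥0∞) := by
          rw [nsmul_eq_mul, mul_one_div]
      _ ≤ _ := by
          apply ENNReal.div_le_div_right
          exact_mod_cast pathSet_card G r hdeg i d
  rw [tsub_le_iff_right]
  calc (1 : ℝ≥0∞) = μ Set.univ := measure_univ.symm
    _ ≤ μ S + μ Sᶜ := by
        rw [← Set.union_compl_self S]
        exact measure_union_le _ _
    _ ≤ μ S + ((r * (r - 1) ^ d : ℕ) : ℝ≥0∞) / ((Nat.factorial (d + 1) : ℕ) : ℝ≥0∞) :=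
        add_le_add_right h1 _
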